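/- Let ρ_L ≥ 0, ρ_R ≥ 0 be real numbers and v_L, v_R ∈ ℝ normal velocities, and let s_L ≥ 0, s_R ≥ 0, s̄ > 0 and v̄ ∈ ℝ. Define the wave speeds σ_L = min(v_L − s_L, v̄ − s̄) and σ_R = max(v̄ + s̄, v_R + s_R). Then σ_L < σ_R, and the HLL intermediate density ρ* = (σ_R·ρ_R − σ_L·ρ_L − (ρ_R·v_R − ρ_L·v_L)) / (σ_R − σ_L) satisfies ρ* ≥ 0. -/
import Mathlib


/-- Positivity preservation of the HLL intermediate density with the Einfeldt
wave speeds `σ_L = min (v_L − s_L) (v̄ − s̄)`, `σ_R = max (v̄ + s̄) (v_R + s_R)`. -/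
theorem stmt_2 (ρL ρR vL vR sL sR sbar vbar : ℝ)
    (hρL : 0 ≤ ρL) (hρR : 0 ≤ ρR) (hsL : 0 ≤ sL) (hsR : 0 ≤ sR) (hsbar : 0 < sbar)
    (σL σR : ℝ)
    (hσL : σL = min (vL - sL) (vbar - sbar))
    (hσR : σR = max (vbar + sbar) (vR + sR)) :
    σL < σR ∧
    0 ≤ (σR * ρR - σL * ρL - (ρR * vR - ρL * vL)) / (σR - σL) := by
  have h1 : σL ≤ vbar - sbar := hσL ▸ min_le_right _ _
  have h2 : vbar + sbar ≤ σR := hσR ▸ le_max_left _ _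
  have h3 : σL ≤ vL - sL := hσL ▸ min_le_left _ _
  have h4 : vR + sR ≤ σR := hσR ▸ le_max_right _ _
  have hlt : σL < σR := by linarith
  refine ⟨hlt, div_nonneg ?_ (by linarith)⟩
  nlinarith [mul_nonneg hρR (by linarith : (0:ℝ) ≤ σR - vR),
    mul_nonneg hρL (by linarith : (0:ℝ) ≤ vL - σL)]
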